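/- Let G be a graph in W₂ and S an independent set of G with |S| < α(G). Then G_S = G \ N_G[S] is in W₂; in particular, G_S has no isolated vertices. -/
import Mathlib


open Set

variable {V : Type*}

/-- `S` is an independent set of `G` contained in the vertex subset `W`
(i.e. an independent set of the induced subgraph `G[W]`). -/
def IsIndepOn (G : SimpleGraph V) (W S : Set V) : Prop :=
  S ⊆ W ∧ ∀ ⦃x⦄, x ∈ S → ∀ ⦃y⦄, y ∈ S → ¬ G.Adj x y

/-- `S` is a maximal independent set of the induced subgraph `G[W]`. -/
def MaxIndepOn (G : SimpleGraph V) (W : Set V) (S : Finset V) : Prop :=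
  IsIndepOn G W ↑S ∧ ∀ v ∈ W, v ∉ S → ¬ IsIndepOn G W (insert v ↑S)

/-- The independence number of the induced subgraph `G[W]`. -/
noncomputable def indepNumOn (G : SimpleGraph V) (W : Set V) : ℕ :=
  sSup {n | ∃ S : Finset V, IsIndepOn G W ↑S ∧ S.card = n}

/-- The induced subgraph `G[W]` is well-covered: every maximal independent set
has cardinality equal to the independence number. -/
def WellCoveredOn (G : SimpleGraph V) (W : Set V) : Prop :=
  ∀ S : Finset V, MaxIndepOn G W S → S.card = indepNumOn G W

/-- The independence number `α(G)`. -/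
noncomputable def indepNum (G : SimpleGraph V) : ℕ := indepNumOn G Set.univ

/-- `G` is well-covered. -/
def WellCovered (G : SimpleGraph V) : Prop := WellCoveredOn G Set.univ

/-- The induced subgraph `G[W]` has no isolated vertices. -/
def NoIsolatedOn (G : SimpleGraph V) (W : Set V) : Prop :=
  ∀ v ∈ W, ∃ u ∈ W, G.Adj v u

/-- The induced subgraph `G[W]` is in the class `W₂`: it has no isolated
vertices, is well-covered, and removing any vertex leaves a well-covered graph
with the same independence number. -/
def W2On (G : SimpleGraph V) (W : Set V) : Prop :=
  NoIsolatedOn G W ∧ WellCoveredOn G W ∧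
    ∀ v ∈ W, WellCoveredOn G (W \ {v}) ∧ indepNumOn G (W \ {v}) = indepNumOn G W

/-- `G` is in the class `W₂`. -/
def W2 (G : SimpleGraph V) : Prop := W2On G Set.univ

/-- The closed neighborhood `N_G[S]` of a set of vertices `S`. -/
def nbhd (G : SimpleGraph V) (S : Set V) : Set V :=
  {v | v ∈ S ∨ ∃ u ∈ S, G.Adj u v}

/-- The vertex set of `G_S = G \ N_G[S]`. -/
def GDel (G : SimpleGraph V) (S : Set V) : Set V := Set.univ \ nbhd G S

/-- The induced subgraph `G[W]` is triangle-free. -/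
def TriangleFreeOn (G : SimpleGraph V) (W : Set V) : Prop :=
  ∀ x ∈ W, ∀ y ∈ W, ∀ z ∈ W, ¬ (G.Adj x y ∧ G.Adj y z ∧ G.Adj x z)

/-- `G` is locally triangle-free: `G_v` is triangle-free for every vertex `v`. -/
def LocallyTriangleFree (G : SimpleGraph V) : Prop :=
  ∀ v : V, TriangleFreeOn G (GDel G {v})

/-- `G` is a join of two proper (nonempty, disjoint) subgraphs. -/
def IsJoin (G : SimpleGraph V) : Prop :=
  ∃ V₁ V₂ : Set V, V₁.Nonempty ∧ V₂.Nonempty ∧ Disjoint V₁ V₂ ∧ V₁ ∪ V₂ = Set.univ ∧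
    ∀ x ∈ V₁, ∀ y ∈ V₂, G.Adj x y



lemma indepOn_mono {G : SimpleGraph V} {W A B : Set V} (h : IsIndepOn G W B) (hAB : A ⊆ B) :
    IsIndepOn G W A :=
  ⟨hAB.trans h.1, fun _ hx _ hy => h.2 (hAB hx) (hAB hy)⟩

lemma indepOn_weaken {G : SimpleGraph V} {W W' A : Set V} (h : IsIndepOn G W A) (hA : A ⊆ W') :
    IsIndepOn G W' A := ⟨hA, h.2⟩

lemma bddAbove_indepSet [Fintype V] (G : SimpleGraph V) (W : Set V) :
    BddAbove {n | ∃ S : Finset V, IsIndepOn G W ↑S ∧ S.card = n} := by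
  refine ⟨Fintype.card V, ?_⟩
  rintro n ⟨S, -, rfl⟩
  simpa using Finset.card_le_univ S

lemma indepSet_nonempty (G : SimpleGraph V) (W : Set V) :
    {n | ∃ S : Finset V, IsIndepOn G W ↑S ∧ S.card = n}.Nonempty :=
  ⟨0, ∅, ⟨by simp, by simp⟩, by simp⟩

lemma card_le_indepNumOn [Fintype V] {G : SimpleGraph V} {W : Set V} {T : Finset V}
    (hT : IsIndepOn G W ↑T) : T.card ≤ indepNumOn G W :=
  le_csSup (bddAbove_indepSet G W) ⟨T, hT, rfl⟩

lemma exists_max_superset [Fintype V] {G : SimpleGraph V} {W : Set V} {T : Finset V}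
    (hT : IsIndepOn G W ↑T) : ∃ M : Finset V, T ⊆ M ∧ MaxIndepOn G W M := by
  classical
  set F := Finset.univ.powerset.filter (fun M : Finset V => T ⊆ M ∧ IsIndepOn G W ↑M) with hF
  have hTF : T ∈ F := by simp [hF, hT]
  obtain ⟨M, hMF, hmax⟩ := F.exists_max_image Finset.card ⟨T, hTF⟩
  simp only [hF, Finset.mem_filter] at hMF
  refine ⟨M, hMF.2.1, hMF.2.2, fun v hv hvM hins => ?_⟩
  have h1 : insert v M ∈ F := by
    simp only [hF, Finset.mem_filter]
    exact ⟨by simp, hMF.2.1.trans (Finset.subset_insert v M), by rwa [Finset.coe_insert]⟩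
  have := hmax _ h1
  rw [Finset.card_insert_of_notMem hvM] at this
  omega

lemma union_indep [Fintype V] [DecidableEq V] {G : SimpleGraph V} {W : Set V} {T A : Finset V}
    (hT : IsIndepOn G W ↑T) (hA : IsIndepOn G (W \ nbhd G ↑T) ↑A) :
    IsIndepOn G W ↑(A ∪ T) ∧ Disjoint A T := by
  have hAn : ∀ a ∈ A, a ∉ nbhd G ↑T := fun a ha => (hA.1 ha).2
  have hdisj : Disjoint A T := by
    rw [Finset.disjoint_left]
    exact fun a ha hat => hAn a ha (Or.inl hat)
  have cross : ∀ a ∈ A, ∀ t ∈ T, ¬ G.Adj a t := by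
    intro a ha t ht hadj
    exact hAn a ha (Or.inr ⟨t, ht, hadj.symm⟩)
  refine ⟨⟨?_, ?_⟩, hdisj⟩
  · rw [Finset.coe_union]
    exact union_subset ((hA.1).trans (diff_subset)) hT.1
  · intro x hx y hy
    rw [Finset.coe_union, Set.mem_union] at hx hy
    rcases hx with hx | hx <;> rcases hy with hy | hy
    · exact hA.2 hx hy
    · exact cross x hx y hy
    · exact fun h => cross y hy x hx h.symm
    · exact hT.2 hx hy

lemma maxIndep_union [Fintype V] [DecidableEq V] {G : SimpleGraph V} {W : Set V} {T M : Finset V}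
    (hT : IsIndepOn G W ↑T) (hM : MaxIndepOn G (W \ nbhd G ↑T) M) :
    MaxIndepOn G W (M ∪ T) := by
  obtain ⟨hind, hdisj⟩ := union_indep hT hM.1
  refine ⟨hind, fun u hu huM hins => ?_⟩
  have huT : u ∉ T := fun h => huM (Finset.mem_union_right M h)
  have hunb : u ∉ nbhd G ↑T := by
    rintro (h | ⟨t, ht, hadj⟩)
    · exact huT h
    · exact hins.2 (Or.inl rfl) (Or.inr (by rw [Finset.coe_union]; exact Or.inr ht)) hadj.symm
  refine hM.2 u ⟨hu, hunb⟩ (fun h => huM (Finset.mem_union_left T h)) ?_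
  refine ⟨?_, fun x hx y hy => hins.2 ?_ ?_⟩
  · rintro x (rfl | hx)
    · exact ⟨hu, hunb⟩
    · exact hM.1.1 hx
  · rcases hx with rfl | hx
    · exact Or.inl rfl
    · exact Or.inr (by rw [Finset.coe_union]; exact Or.inl hx)
  · rcases hy with rfl | hy
    · exact Or.inl rfl
    · exact Or.inr (by rw [Finset.coe_union]; exact Or.inl hy)

lemma factA [Fintype V] [DecidableEq V] {G : SimpleGraph V} {W : Set V}
    (hW : WellCoveredOn G W) {T : Finset V} (hT : IsIndepOn G W ↑T) :
    WellCoveredOn G (W \ nbhd G ↑T) ∧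
      indepNumOn G (W \ nbhd G ↑T) = indepNumOn G W - T.card := by
  have key : ∀ M : Finset V, MaxIndepOn G (W \ nbhd G ↑T) M →
      M.card = indepNumOn G W - T.card ∧ T.card ≤ indepNumOn G W := by
    intro M hM
    have h1 := hW _ (maxIndep_union hT hM)
    obtain ⟨-, hdisj⟩ := union_indep hT hM.1
    rw [Finset.card_union_of_disjoint hdisj] at h1
    omega
  obtain ⟨M0, -, hM0⟩ := exists_max_superset (T := (∅ : Finset V))
    (W := W \ nbhd G ↑T) (G := G) ⟨by simp, by simp⟩
  have heq : indepNumOn G (W \ nbhd G ↑T) = indepNumOn G W - T.card := by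
    apply le_antisymm
    · refine csSup_le (indepSet_nonempty G _) ?_
      rintro n ⟨A, hA, rfl⟩
      obtain ⟨hind, hdisj⟩ := union_indep hT hA
      have := card_le_indepNumOn hind
      rw [Finset.card_union_of_disjoint hdisj] at this
      omega
    · rw [← (key M0 hM0).1]
      exact card_le_indepNumOn hM0.1
  exact ⟨fun M hM => by rw [(key M hM).1, heq], heq⟩

/-- If `G` is in `W₂` and `S` is an independent set with `|S| < α(G)`, then
`G_S` is in `W₂`; in particular `G_S` has no isolated vertices. -/
theorem stmt_8 [Fintype V] (G : SimpleGraph V) (h2 : W2 G)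
    (S : Finset V) (hS : IsIndepOn G Set.univ ↑S) (hcard : S.card < indepNum G) :
    W2On G (GDel G ↑S) ∧ NoIsolatedOn G (GDel G ↑S) := by
  classical
  obtain ⟨hiso, hwc, hdel⟩ := h2
  have hGDel : GDel G ↑S = Set.univ \ nbhd G ↑S := rfl
  have hfA := factA hwc hS
  rw [← hGDel] at hfA
  -- per-vertex facts
  have hvert : ∀ v ∈ GDel G ↑S,
      WellCoveredOn G (GDel G ↑S \ {v}) ∧
        indepNumOn G (GDel G ↑S \ {v}) = indepNumOn G Set.univ - S.card := by
    intro v hv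
    obtain ⟨hwcv, hαv⟩ := hdel v (mem_univ v)
    have hSv : IsIndepOn G (Set.univ \ {v}) ↑S := by
      refine ⟨fun s hs => ⟨mem_univ s, ?_⟩, hS.2⟩
      rintro rfl
      exact hv.2 (Or.inl hs)
    have hset : (Set.univ \ {v}) \ nbhd G ↑S = GDel G ↑S \ {v} := by
      ext x; simp only [GDel, mem_diff, mem_univ, true_and, mem_singleton_iff]; tauto
    have := factA hwcv hSv
    rw [hset, hαv] at this
    exact this
  have hnoiso : NoIsolatedOn G (GDel G ↑S) := by
    intro v hv
    by_contra hcon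
    push_neg at hcon
    obtain ⟨hwcv, hαv⟩ := hvert v hv
    obtain ⟨hwcv', hαv'⟩ := hdel v (mem_univ v)
    have hSv : IsIndepOn G (Set.univ \ {v}) ↑S := by
      refine ⟨fun s hs => ⟨mem_univ s, ?_⟩, hS.2⟩
      rintro rfl
      exact hv.2 (Or.inl hs)
    have hset : (Set.univ \ {v}) \ nbhd G ↑S = GDel G ↑S \ {v} := by
      ext x; simp only [GDel, mem_diff, mem_univ, true_and, mem_singleton_iff]; tauto
    -- maximal independent set of GDel S \ {v}
    obtain ⟨M, -, hM⟩ := exists_max_superset (T := (∅ : Finset V))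
      (W := (Set.univ \ {v}) \ nbhd G ↑S) (G := G) ⟨by simp, by simp⟩
    have hMS : MaxIndepOn G (Set.univ \ {v}) (M ∪ S) := maxIndep_union hSv hM
    have hcardMS : (M ∪ S).card = indepNumOn G Set.univ := by
      rw [hwcv' _ hMS, hαv']
    -- v is not in M ∪ S
    have hvM : v ∉ M := by
      intro h
      have := hM.1.1 h
      rw [hset] at this
      exact this.2 rfl
    have hvS : v ∉ S := fun h => hv.2 (Or.inl h)
    have hvMS : v ∉ M ∪ S := by simp [hvM, hvS]
    -- insert v (M ∪ S) is maximal independent in univ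
    have hMsub : (↑M : Set V) ⊆ GDel G ↑S := by
      intro x hx
      have := hM.1.1 hx
      rw [hset] at this
      exact this.1
    have hindI : IsIndepOn G Set.univ ↑(insert v (M ∪ S)) := by
      refine ⟨subset_univ _, ?_⟩
      have hMSind : ∀ ⦃x⦄, x ∈ (↑(M ∪ S) : Set V) → ∀ ⦃y⦄, y ∈ (↑(M ∪ S) : Set V) → ¬ G.Adj x y :=
        hMS.1.2
      have hvadj : ∀ x ∈ (↑(M ∪ S) : Set V), ¬ G.Adj v x := by
        intro x hx
        rw [Finset.coe_union, Set.mem_union] at hx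
        rcases hx with hx | hx
        · exact hcon x (hMsub hx)
        · exact fun h => hv.2 (Or.inr ⟨x, hx, h.symm⟩)
      rw [Finset.coe_insert]
      rintro x (rfl | hx) y (rfl | hy)
      · simp
      · exact hvadj y hy
      · exact fun h => hvadj x hx h.symm
      · exact hMSind hx hy
    have hmaxI : MaxIndepOn G Set.univ (insert v (M ∪ S)) := by
      refine ⟨hindI, fun u hu huI hins => ?_⟩
      have huv : u ≠ v := by rintro rfl; exact huI (Finset.mem_insert_self _ _)
      have huMS : u ∉ M ∪ S := fun h => huI (Finset.mem_insert_of_mem h)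
      refine hMS.2 u ⟨mem_univ u, huv⟩ huMS ⟨?_, ?_⟩
      · rintro x (rfl | hx)
        · exact ⟨mem_univ _, huv⟩
        · exact hMS.1.1 hx
      · intro x hx y hy
        have key : ∀ z, z ∈ insert u (↑(M ∪ S) : Set V) →
            z ∈ insert u (↑(insert v (M ∪ S)) : Set V) := by
          rintro z (rfl | hz)
          · exact Or.inl rfl
          · exact Or.inr (by rw [Finset.coe_insert]; exact Or.inr hz)
        exact hins.2 (key x hx) (key y hy)
    have h1 := hwc _ hmaxI
    rw [Finset.card_insert_of_notMem hvMS, hcardMS] at h1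
    omega
  refine ⟨⟨hnoiso, hfA.1, fun v hv => ?_⟩, hnoiso⟩
  obtain ⟨h1, h2'⟩ := hvert v hv
  exact ⟨h1, by rw [h2', hfA.2]⟩
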